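/- Let n ≥ 1 and let F ⊆ ℕⁿ be a nonempty finite set, with Newton polyhedron Γ₊ defined as the convex hull in ℝⁿ of ⋃_{ν∈F} ({ν} + [0,∞)ⁿ). If the point (1,1,…,1) does not belong to Γ₊, then there exists a ∈ ℝⁿ with aᵢ > 0 for every i such that m(a) > s(a), where m(a) = min_{ν∈F} ⟨a,ν⟩ and s(a) = a₁ + ⋯ + aₙ. -/

import Mathlib

open scoped Pointwise

/-- If `(1,…,1)` is not in the Newton polyhedron `Γ₊` of a nonempty finite
support `F ⊆ ℕⁿ`, then there is a strictly positive direction `a` with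
`m(a) > s(a)`. -/
theorem newton_one_not_mem_exists_pos (n : ℕ) (hn : 1 ≤ n)
    (F : Finset (Fin n → ℕ)) (hF : F.Nonempty)
    (h1 : (fun _ => (1 : ℝ)) ∉
      convexHull ℝ (⋃ ν ∈ F,
        (({fun i => (ν i : ℝ)} : Set (Fin n → ℝ)) +
          {x : Fin n → ℝ | ∀ i, 0 ≤ x i}))) :
    ∃ a : Fin n → ℝ, (∀ i, 0 < a i) ∧
      (∑ i, a i) < F.inf' hF fun ν => ∑ i, a i * (ν i : ℝ) := by
  classical
  set C : Set (Fin n → ℝ) := {x : Fin n → ℝ | ∀ i, 0 ≤ x i} with hC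
  set g : (Fin n → ℕ) → (Fin n → ℝ) := fun ν i => (ν i : ℝ) with hg
  have hunion : (⋃ ν ∈ F, (({g ν} : Set (Fin n → ℝ)) + C)) = (g '' ↑F) + C := by
    ext x
    simp only [Set.mem_iUnion, Set.mem_add, Set.mem_image, Set.mem_singleton_iff,
      Finset.mem_coe]
    constructor
    · rintro ⟨ν, hν, a, rfl, b, hb, rfl⟩
      exact ⟨g ν, ⟨ν, hν, rfl⟩, b, hb, rfl⟩
    · rintro ⟨a, ⟨ν, hν, rfl⟩, b, hb, rfl⟩
      exact ⟨ν, hν, g ν, rfl, b, hb, rfl⟩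
  have hCconv : Convex ℝ C := by
    intro x hx y hy s t hs ht hst i
    have := hx i; have := hy i
    have : 0 ≤ s * x i + t * y i := by positivity
    simpa using this
  have hhull : convexHull ℝ ((g '' ↑F) + C) = convexHull ℝ (g '' ↑F) + C := by
    rw [convexHull_add, hCconv.convexHull_eq]
  have hCclosed : IsClosed C := by
    have : C = ⋂ i, (fun x : Fin n → ℝ => x i) ⁻¹' Set.Ici 0 := by
      ext x; simp [hC, Set.mem_iInter]
    rw [this]
    exact isClosed_iInter fun i => (isClosed_Ici).preimage (continuous_apply i)
  have hcompact : IsCompact (convexHull ℝ (g '' ↑F)) :=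
    (F.finite_toSet.image g).isCompact_convexHull ℝ
  have hclosed : IsClosed (convexHull ℝ (g '' ↑F) + C) :=
    hCclosed.add_left_of_isCompact hcompact
  have hconv : Convex ℝ (convexHull ℝ (g '' ↑F) + C) :=
    (convex_convexHull ℝ _).add hCconv
  have h1' : (fun _ => (1 : ℝ)) ∉ convexHull ℝ (g '' ↑F) + C := by
    rw [← hhull, ← hunion]; exact h1
  obtain ⟨f, u, hfu, hub⟩ := geometric_hahn_banach_point_closed hconv hclosed h1'
  set a : Fin n → ℝ := fun i => f (Pi.single i 1) with ha
  have hfx : ∀ x : Fin n → ℝ, f x = ∑ i, x i * a i := by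
    intro x
    have hxdecomp : x = ∑ i, x i • (Pi.single i 1 : Fin n → ℝ) := by
      funext j
      simp [Finset.sum_apply, Pi.single_apply]
    conv_lhs => rw [hxdecomp]
    rw [map_sum]
    refine Finset.sum_congr rfl fun i _ => ?_
    rw [map_smul]; simp [ha, smul_eq_mul]
  -- membership helper
  have hmem : ∀ ν ∈ F, ∀ c ∈ C, g ν + c ∈ convexHull ℝ (g '' ↑F) + C := by
    intro ν hν c hc
    exact Set.add_mem_add (subset_convexHull ℝ _ ⟨ν, hν, rfl⟩) hc
  obtain ⟨ν₀, hν₀⟩ := hF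
  have hanonneg : ∀ i, 0 ≤ a i := by
    intro i
    by_contra hneg
    push_neg at hneg
    have hnum : u < f (g ν₀) := by
      have hm := hub _ (hmem ν₀ hν₀ 0 (fun j => le_refl 0))
      rwa [add_zero] at hm
    set t : ℝ := (f (g ν₀) - u + 1) / (-a i) with ht
    have hts : 0 < -a i := by linarith
    have htpos : 0 ≤ t := by
      apply div_nonneg (by linarith) hts.le
    have hmem' : g ν₀ + t • (Pi.single i 1 : Fin n → ℝ) ∈ convexHull ℝ (g '' ↑F) + C := by
      refine hmem ν₀ hν₀ _ ?_
      intro j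
      by_cases hj : j = i
      · subst hj; simp [Pi.single_apply, htpos]
      · simp [Pi.single_apply, hj]
    have := hub _ hmem'
    rw [map_add, map_smul] at this
    have hta : t * a i = -(f (g ν₀) - u + 1) := by
      rw [ht, div_mul_eq_mul_div, div_eq_iff hts.ne']
      ring
    simp only [smul_eq_mul, ← ha] at this
    rw [hta] at this
    linarith
  have hsum1 : f (fun _ => (1 : ℝ)) = ∑ i, a i := by
    rw [hfx]; simp
  have hs_lt_u : (∑ i, a i) < u := by rw [← hsum1]; exact hfu
  have hkey : ∀ ν ∈ F, u < ∑ i, a i * (ν i : ℝ) := by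
    intro ν hν
    have hm : g ν + 0 ∈ convexHull ℝ (g '' ↑F) + C := hmem ν hν 0 (fun i => le_refl 0)
    have := hub _ hm
    rw [add_zero, hfx] at this
    simpa [mul_comm] using this
  -- perturb a to be strictly positive
  set ε : ℝ := (u - ∑ i, a i) / (2 * n) with hε
  have hnpos : (0 : ℝ) < n := by exact_mod_cast hn
  have hεpos : 0 < ε := by
    apply div_pos (by linarith) (by linarith)
  refine ⟨fun i => a i + ε, fun i => ?_, ?_⟩
  · show (0:ℝ) < a i + ε
    have := hanonneg i; linarith
  apply (Finset.lt_inf'_iff _).2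
  intro ν hν
  have h1 : ∑ i, (a i + ε) = (∑ i, a i) + n * ε := by
    rw [Finset.sum_add_distrib]
    simp [Finset.sum_const, mul_comm]
  have h2 : ∑ i, (a i + ε) * (ν i : ℝ)
      = (∑ i, a i * (ν i : ℝ)) + ε * ∑ i, (ν i : ℝ) := by
    rw [Finset.mul_sum, ← Finset.sum_add_distrib]
    refine Finset.sum_congr rfl fun i _ => ?_
    ring
  have h3 : 0 ≤ ε * ∑ i, (ν i : ℝ) := by
    apply mul_nonneg hεpos.le
    exact Finset.sum_nonneg fun i _ => Nat.cast_nonneg _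
  have h4 : u < ∑ i, a i * (ν i : ℝ) := hkey ν hν
  have h5 : (n : ℝ) * ε = (u - ∑ i, a i) / 2 := by
    rw [hε, mul_div_assoc', div_eq_div_iff (ne_of_gt (by linarith)) (by norm_num)]
    ring
  rw [h1, h2]
  rw [h5]
  linarith
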